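/- With the discrete Toda evolution x̄_j = x_j P_{j−1}/P_j, ȳ_j = y_j P_j/P_{j−1} (n=3, indices mod 3), the characteristic quantities are conserved: x̄₁ȳ₁+x̄₂ȳ₂+x̄₃ȳ₃ = x₁y₁+x₂y₂+x₃y₃, x̄₁x̄₂x̄₃+ȳ₁ȳ₂ȳ₃ = x₁x₂x₃+y₁y₂y₃, x̄₁x̄₂ȳ₁ȳ₂+x̄₂x̄₃ȳ₂ȳ₃+x̄₃x̄₁ȳ₃ȳ₁ = x₁x₂y₁y₂+x₂x₃y₂y₃+x₃x₁y₃y₁, and x̄₁+x̄₂+x̄₃+ȳ₁+ȳ₂+ȳ₃ = x₁+x₂+x₃+y₁+y₂+y₃. -/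
import Mathlib


noncomputable section

/-- The rational function field `ℂ(x₁,x₂,x₃,y₁,y₂,y₃)`. -/
abbrev K : Type := FractionRing (MvPolynomial (Fin 6) ℂ)

/-- The generators of `K`. -/
def X (i : Fin 6) : K := algebraMap (MvPolynomial (Fin 6) ℂ) K (MvPolynomial.X i)

def x1 : K := X 0
def x2 : K := X 1
def x3 : K := X 2
def y1 : K := X 3
def y2 : K := X 4
def y3 : K := X 5

/-- The discrete Toda denominators `P_j = Σ_{a=1}^{3}(Π_{k=1}^{a−1} y_{j+k})(Π_{k=a+1}^{3} x_{j+k})`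
(indices mod 3). -/
def P1 : K := x3 * x1 + y2 * x1 + y2 * y3
def P2 : K := x1 * x2 + y3 * x2 + y3 * y1
def P3 : K := x2 * x3 + y1 * x3 + y1 * y2

/-- `x̄_j = x_j P_{j−1}/P_j` (with `P₀ = P₃`). -/
def xb1 : K := x1 * P3 / P1
def xb2 : K := x2 * P1 / P2
def xb3 : K := x3 * P2 / P3

/-- `ȳ_j = y_j P_j/P_{j−1}`. -/
def yb1 : K := y1 * P1 / P3
def yb2 : K := y2 * P2 / P1
def yb3 : K := y3 * P3 / P2

lemma X_ne (i : Fin 6) : X i ≠ 0 := by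
  unfold X
  rw [map_ne_zero_iff _ (IsFractionRing.injective (MvPolynomial (Fin 6) ℂ) K)]
  exact MvPolynomial.X_ne_zero i

lemma aux_ne (a b c d : Fin 6) : X a * X b + X c * X b + X c * X d ≠ 0 := by
  unfold X
  rw [← map_mul, ← map_mul, ← map_mul, ← map_add, ← map_add,
    map_ne_zero_iff _ (IsFractionRing.injective (MvPolynomial (Fin 6) ℂ) K)]
  intro h
  have := congrArg (MvPolynomial.eval fun _ => (1 : ℂ)) h
  simp at this
  norm_num at this

lemma hP1 : P1 ≠ 0 := aux_ne 2 0 4 5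
lemma hP2 : P2 ≠ 0 := aux_ne 0 1 5 3
lemma hP3 : P3 ≠ 0 := aux_ne 1 2 3 4

set_option synthInstance.maxHeartbeats 1000000 in
set_option maxHeartbeats 1000000 in
/-- the coefficients of the characteristic polynomial of `A(x)A(y)`
are conserved by the discrete Toda evolution. -/
theorem stmt14 :
    xb1 * yb1 + xb2 * yb2 + xb3 * yb3 = x1 * y1 + x2 * y2 + x3 * y3 ∧
    xb1 * xb2 * xb3 + yb1 * yb2 * yb3 = x1 * x2 * x3 + y1 * y2 * y3 ∧
    xb1 * xb2 * yb1 * yb2 + xb2 * xb3 * yb2 * yb3 + xb3 * xb1 * yb3 * yb1 =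
      x1 * x2 * y1 * y2 + x2 * x3 * y2 * y3 + x3 * x1 * y3 * y1 ∧
    xb1 + xb2 + xb3 + yb1 + yb2 + yb3 = x1 + x2 + x3 + y1 + y2 + y3 := by
  have e1 : xb1 * yb1 = x1 * y1 := by
    unfold xb1 yb1
    rw [div_mul_div_comm, div_eq_iff (mul_ne_zero hP1 hP3)]; ring
  have e2 : xb2 * yb2 = x2 * y2 := by
    unfold xb2 yb2
    rw [div_mul_div_comm, div_eq_iff (mul_ne_zero hP2 hP1)]; ring
  have e3 : xb3 * yb3 = x3 * y3 := by
    unfold xb3 yb3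
    rw [div_mul_div_comm, div_eq_iff (mul_ne_zero hP3 hP2)]; ring
  have f1 : xb1 * xb2 * xb3 = x1 * x2 * x3 := by
    unfold xb1 xb2 xb3
    rw [div_mul_div_comm, div_mul_div_comm,
      div_eq_iff (mul_ne_zero (mul_ne_zero hP1 hP2) hP3)]; ring
  have f2 : yb1 * yb2 * yb3 = y1 * y2 * y3 := by
    unfold yb1 yb2 yb3
    rw [div_mul_div_comm, div_mul_div_comm,
      div_eq_iff (mul_ne_zero (mul_ne_zero hP3 hP1) hP2)]; ring
  have g1 : xb1 * xb2 * yb1 * yb2 = x1 * x2 * y1 * y2 := by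
    unfold xb1 xb2 yb1 yb2
    rw [div_mul_div_comm, div_mul_div_comm, div_mul_div_comm,
      div_eq_iff (mul_ne_zero (mul_ne_zero (mul_ne_zero hP1 hP2) hP3) hP1)]; ring
  have g2 : xb2 * xb3 * yb2 * yb3 = x2 * x3 * y2 * y3 := by
    unfold xb2 xb3 yb2 yb3
    rw [div_mul_div_comm, div_mul_div_comm, div_mul_div_comm,
      div_eq_iff (mul_ne_zero (mul_ne_zero (mul_ne_zero hP2 hP3) hP1) hP2)]; ring
  have g3 : xb3 * xb1 * yb3 * yb1 = x3 * x1 * y3 * y1 := by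
    unfold xb3 xb1 yb3 yb1
    rw [div_mul_div_comm, div_mul_div_comm, div_mul_div_comm,
      div_eq_iff (mul_ne_zero (mul_ne_zero (mul_ne_zero hP3 hP1) hP2) hP3)]; ring
  refine ⟨by rw [e1, e2, e3], by rw [f1, f2], by rw [g1, g2, g3], ?_⟩
  have h4 : xb1 + xb2 + xb3 + yb1 + yb2 + yb3 =
      (x1 * P3 + y2 * P2) / P1 + (x2 * P1 + y3 * P3) / P2 + (x3 * P2 + y1 * P1) / P3 := by
    unfold xb1 xb2 xb3 yb1 yb2 yb3; ring
  rw [h4, div_add_div _ _ hP1 hP2, div_add_div _ _ (mul_ne_zero hP1 hP2) hP3,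
    div_eq_iff (mul_ne_zero (mul_ne_zero hP1 hP2) hP3)]
  unfold P1 P2 P3
  ring
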